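/- arXiv:1003.4855 — 2 statements merged into one kernel-verified Lean document; each statement's English description precedes it below -/
import Mathlib

section
/- For any connected graph G and any n ≥ 3, pd(G × C_n) ≤ pd(G) + 2, where C_n is the cycle on n vertices. -/
open SimpleGraph

/-- Distance from a vertex to a set of vertices: `min {d(v,x) : x ∈ P}`. -/
noncomputable def distToSet {V : Type*} (G : SimpleGraph V) (v : V) (P : Set V) : ℕ :=
  sInf ((G.dist v) '' P)

/-- `S` is a resolving set of `G`. -/
def IsResolvingSet {V : Type*} (G : SimpleGraph V) (S : Set V) : Prop :=
  ∀ u v : V, u ≠ v → ∃ w ∈ S, G.dist u w ≠ G.dist v w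

/-- The metric dimension of `G`. -/
noncomputable def metricDim {V : Type*} (G : SimpleGraph V) : ℕ :=
  sInf {n | ∃ S : Finset V, S.card = n ∧ IsResolvingSet G ↑S}

/-- `Π` is a resolving partition of `G`: a partition of the vertex set such that
distinct vertices have distinct vectors of distances to the parts. -/
def IsResolvingPartition {V : Type*} (G : SimpleGraph V) (Pi : Set (Set V)) : Prop :=
  Setoid.IsPartition Pi ∧
    ∀ u v : V, u ≠ v → ∃ P ∈ Pi, distToSet G u P ≠ distToSet G v P

/-- The partition dimension of `G`. -/
noncomputable def partitionDim {V : Type*} (G : SimpleGraph V) : ℕ :=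
  sInf {n | ∃ Pi : Finset (Set V), Pi.card = n ∧ IsResolvingPartition G ↑Pi}



lemma boxProd_dist_le_aux {α β : Type*} {G : SimpleGraph α} {H : SimpleGraph β}
    (hG : G.Connected) (hH : H.Connected)
    {x y : α × β} (w : (G.boxProd H).Walk x y) :
    G.dist x.1 y.1 + H.dist x.2 y.2 ≤ w.length := by
  induction w with
  | nil => simp
  | @cons u z v h w ih =>
    rw [SimpleGraph.Walk.length_cons]
    rcases h with ⟨h1, h2⟩ | ⟨h1, h2⟩
    · have t := hG.dist_triangle (u := u.1) (v := z.1) (w := v.1)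
      have : G.dist u.1 z.1 ≤ 1 := by
        rw [← SimpleGraph.dist_eq_one_iff_adj] at h1; omega
      rw [h2]; omega
    · have t := hH.dist_triangle (u := u.2) (v := z.2) (w := v.2)
      have : H.dist u.2 z.2 ≤ 1 := by
        rw [← SimpleGraph.dist_eq_one_iff_adj] at h1; omega
      rw [h2]; omega

lemma boxProd_dist {α β : Type*} {G : SimpleGraph α} {H : SimpleGraph β}
    (hG : G.Connected) (hH : H.Connected) (x y : α × β) :
    (G.boxProd H).dist x y = G.dist x.1 y.1 + H.dist x.2 y.2 := by
  refine le_antisymm ?_ ?_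
  · obtain ⟨w1, hw1⟩ := hG.exists_walk_length_eq_dist x.1 y.1
    obtain ⟨w2, hw2⟩ := hH.exists_walk_length_eq_dist x.2 y.2
    have := SimpleGraph.dist_le ((w1.boxProdLeft H x.2).append (w2.boxProdRight G y.1))
    have e1 : (w1.boxProdLeft H x.2).length = w1.length := SimpleGraph.Walk.length_map _ _
    have e2 : (w2.boxProdRight G y.1).length = w2.length := SimpleGraph.Walk.length_map _ _
    rw [SimpleGraph.Walk.length_append, e1, e2, hw1, hw2] at this
    exact this
  · obtain ⟨w, hw⟩ := (hG.boxProd hH).exists_walk_length_eq_dist x y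
    rw [← hw]
    exact boxProd_dist_le_aux hG hH w


open Fin.NatCast Fin.CommRing in
lemma cycle_dist_le_step (m : ℕ) (u : Fin (m+3)) (k : ℕ) :
    (cycleGraph (m+3)).dist u (u + (k : Fin (m+3))) ≤ k := by
  induction k with
  | zero => simp
  | succ k ih =>
    have hconn : (cycleGraph (m+3)).Connected := cycleGraph_connected
    have t := hconn.dist_triangle (u := u) (v := u + (k : Fin (m+3)))
      (w := u + ((k+1 : ℕ) : Fin (m+3)))
    have hadj : (cycleGraph (m+3)).Adj (u + (k : Fin (m+3))) (u + ((k+1 : ℕ) : Fin (m+3))) := by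
      rw [cycleGraph_adj']
      right
      have : u + ((k+1 : ℕ) : Fin (m+3)) - (u + (k : Fin (m+3))) = 1 := by
        push_cast; ring
      rw [this]; rfl
    have := SimpleGraph.dist_eq_one_iff_adj.mpr hadj
    omega

open Fin.NatCast Fin.CommRing in
lemma cycle_walk_length_ge (m : ℕ) :
    ∀ {u v : Fin (m+3)} (w : (cycleGraph (m+3)).Walk u v),
    min ((v-u).val) ((m+3) - (v-u).val) ≤ w.length
  | u, _, SimpleGraph.Walk.nil => by simp
  | u, v, @SimpleGraph.Walk.cons _ _ _ z _ h w => by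
    have ih := cycle_walk_length_ge m w
    rw [SimpleGraph.Walk.length_cons]
    have hvu : v - u = (v - z) + (z - u) := (sub_add_sub_cancel v z u).symm
    have hA : (v - z).val < m+3 := (v - z).isLt
    have hB : (v - u).val < m+3 := (v - u).isLt
    have hadd : (v - u).val = ((v-z).val + (z-u).val) % (m+3) := by rw [hvu, Fin.add_def]
    rw [cycleGraph_adj'] at h
    rcases h with h1 | h1
    · -- (u - z).val = 1, so (z - u).val = m+2
      have hzu : (z - u).val = m+2 := by
        rw [show z - u = -(u - z) by ring, Fin.neg_def, h1]
        exact Nat.mod_eq_of_lt (by omega)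
      rw [hzu] at hadd
      rcases Nat.eq_zero_or_pos (v - z).val with h0 | h0
      · rw [h0] at hadd
        simp only [Nat.zero_add] at hadd
        rw [Nat.mod_eq_of_lt (by omega)] at hadd
        omega
      · have he : (v-z).val + (m+2) = ((v-z).val - 1) + (m+3) := by omega
        rw [he, Nat.add_mod_right, Nat.mod_eq_of_lt (by omega)] at hadd
        omega
    · -- (z - u).val = 1
      rw [h1] at hadd
      rcases Nat.lt_or_ge ((v-z).val + 1) (m+3) with hlt | hge
      · rw [Nat.mod_eq_of_lt hlt] at hadd
        omega
      · have he : (v-z).val + 1 = m+3 := by omega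
        rw [he, Nat.mod_self] at hadd
        omega

open Fin.NatCast Fin.CommRing in
lemma cycle_dist (m : ℕ) (u v : Fin (m+3)) :
    (cycleGraph (m+3)).dist u v = min ((v-u).val) ((m+3) - (v-u).val) := by
  refine le_antisymm ?_ ?_
  · rcases eq_or_ne u v with rfl | hne
    · simp
    · have h1 : (cycleGraph (m+3)).dist u v ≤ (v - u).val := by
        have := cycle_dist_le_step m u ((v-u).val)
        rwa [Fin.cast_val_eq_self, show u + (v - u) = v by ring] at this
      have h2 : (cycleGraph (m+3)).dist u v ≤ (m+3) - (v - u).val := by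
        have := cycle_dist_le_step m v ((u-v).val)
        rw [Fin.cast_val_eq_self, show v + (u - v) = u by ring] at this
        have hpos : 0 < (v - u).val := by
          rcases Nat.eq_zero_or_pos (v-u).val with h0 | h0
          · exact absurd (sub_eq_zero.mp (Fin.ext h0 : v - u = 0)) hne.symm
          · exact h0
        have hval : (u - v).val = (m + 3) - (v - u).val := by
          rw [show u - v = -(v - u) by ring, Fin.neg_def]
          exact Nat.mod_eq_of_lt (by omega)
        rw [SimpleGraph.dist_comm]
        omega
      omega
  · obtain ⟨w, hw⟩ := (cycleGraph_connected (n := m+2)).exists_walk_length_eq_dist u v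
    rw [← hw]
    exact cycle_walk_length_ge m w



lemma cycle_resolve (m : ℕ) {u v : Fin (m+3)} (h : u ≠ v) :
    (cycleGraph (m+3)).dist u 0 ≠ (cycleGraph (m+3)).dist v 0 ∨
    (cycleGraph (m+3)).dist u 1 ≠ (cycleGraph (m+3)).dist v 1 := by
  have key : ∀ w : Fin (m+3),
      ((0 : Fin (m+3)) - w).val = ((m+3) - w.val + 0) % (m+3) ∧
      ((1 : Fin (m+3)) - w).val = ((m+3) - w.val + 1) % (m+3) := by
    intro w
    constructor <;> (rw [Fin.sub_def]; rfl)
  have mods : ∀ w : Fin (m+3),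
      (((m+3) - w.val + 0) % (m+3) = if w.val = 0 then 0 else (m+3) - w.val) ∧
      (((m+3) - w.val + 1) % (m+3) =
        if w.val = 0 then 1 else if w.val = 1 then 0 else (m+3) - w.val + 1) := by
    intro w
    have hw : w.val < m+3 := w.isLt
    rcases Nat.eq_zero_or_pos w.val with h0 | h0
    · rw [h0]
      simp only [Nat.sub_zero, Nat.add_zero, Nat.mod_self, if_pos rfl]
      constructor
      · rfl
      · have : (m+3+1) % (m+3) = 1 := by
          rw [show m+3+1 = 1 + (m+3) by omega, Nat.add_mod_right]
          exact Nat.mod_eq_of_lt (by omega)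
        exact this
    · rcases Nat.eq_or_lt_of_le h0 with h1 | h1
      · rw [← h1]
        constructor
        · rw [if_neg (by omega)]
          exact Nat.mod_eq_of_lt (by omega)
        · rw [if_neg (by omega), if_pos rfl, show m+3-1+1 = m+3 by omega, Nat.mod_self]
      · constructor
        · rw [if_neg (by omega)]
          exact Nat.mod_eq_of_lt (by omega)
        · rw [if_neg (by omega), if_neg (by omega)]
          exact Nat.mod_eq_of_lt (by omega)
  rw [cycle_dist m u 0, cycle_dist m v 0, cycle_dist m u 1, cycle_dist m v 1,
    (key u).1, (key u).2, (key v).1, (key v).2, (mods u).1, (mods u).2,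
    (mods v).1, (mods v).2]
  have hu : u.val < m+3 := u.isLt
  have hv : v.val < m+3 := v.isLt
  have hne : u.val ≠ v.val := fun hc => h (Fin.ext hc)
  by_contra hc
  push_neg at hc
  obtain ⟨e1, e2⟩ := hc
  split_ifs at e1 e2 <;> omega

lemma distToSet_prod' {α β : Type*} {G : SimpleGraph α} {H : SimpleGraph β}
    (hG : G.Connected) (hH : H.Connected) {A : Set α} {B : Set β}
    (hA : A.Nonempty) (hB : B.Nonempty) (g : α) (h : β) :
    distToSet (G.boxProd H) (g, h) (A ×ˢ B) = distToSet G g A + distToSet H h B := by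
  unfold distToSet
  obtain ⟨a0, ha0, ha0e⟩ := Nat.sInf_mem (hA.image (G.dist g))
  obtain ⟨b0, hb0, hb0e⟩ := Nat.sInf_mem (hB.image (H.dist h))
  refine le_antisymm ?_ ?_
  · refine Nat.sInf_le ⟨(a0, b0), ⟨ha0, hb0⟩, ?_⟩
    rw [boxProd_dist hG hH]
    rw [ha0e, hb0e]
  · obtain ⟨p, hp, hpe⟩ := Nat.sInf_mem ((hA.prod hB).image ((G.boxProd H).dist (g, h)))
    rw [← hpe, boxProd_dist hG hH]
    exact Nat.add_le_add (Nat.sInf_le ⟨p.1, hp.1, rfl⟩) (Nat.sInf_le ⟨p.2, hp.2, rfl⟩)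

lemma distToSet_univ {α : Type*} (G : SimpleGraph α) (g : α) :
    distToSet G g Set.univ = 0 :=
  Nat.eq_zero_of_le_zero (Nat.sInf_le ⟨g, trivial, SimpleGraph.dist_self⟩)

lemma distToSet_singleton {α : Type*} (G : SimpleGraph α) (g w : α) :
    distToSet G g {w} = G.dist g w := by
  simp [distToSet]

-- existence of a resolving partition (singletons)
lemma exists_resolving_partition {V : Type*} [Fintype V] (G : SimpleGraph V)
    (hG : G.Connected) :
    {n | ∃ Pi : Finset (Set V), Pi.card = n ∧ IsResolvingPartition G ↑Pi}.Nonempty := by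
  classical
  refine ⟨_, Finset.univ.image (fun v => ({v} : Set V)), rfl, ?_, ?_⟩
  · constructor
    · intro hmem
      simp only [Finset.coe_image, Finset.coe_univ, Set.image_univ, Set.mem_range] at hmem
      obtain ⟨v, hv⟩ := hmem
      exact (Set.singleton_nonempty v).ne_empty hv
    · intro a
      refine ⟨{a}, ⟨?_, rfl⟩, ?_⟩
      · simp
      · rintro b ⟨hb, hab⟩
        simp only [Finset.coe_image, Finset.coe_univ, Set.image_univ, Set.mem_range] at hb
        obtain ⟨v, rfl⟩ := hb
        simp only [Set.mem_singleton_iff] at hab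
        subst hab; rfl
  · intro u v huv
    refine ⟨{u}, ?_, ?_⟩
    · simp
    · rw [distToSet, distToSet]
      simp only [Set.image_singleton]
      rw [csInf_singleton, csInf_singleton, SimpleGraph.dist_self]
      intro hc
      have := (SimpleGraph.dist_ne_zero_iff_ne_and_reachable (G := G)).mpr
        ⟨huv.symm, hG.preconnected v u⟩
      exact this hc.symm

theorem stmt_10 {V : Type*} [Fintype V] (G : SimpleGraph V) (hG : G.Connected)
    (n : ℕ) (hn : 3 ≤ n) :
    partitionDim (G.boxProd (SimpleGraph.cycleGraph n)) ≤ partitionDim G + 2 := by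
  classical
  obtain ⟨m, rfl⟩ : ∃ m, n = m + 3 := ⟨n - 3, by omega⟩
  set C := SimpleGraph.cycleGraph (m+3) with hC
  have hCconn : C.Connected := cycleGraph_connected (n := m+2)
  -- optimal partition of G
  obtain ⟨Pi, hcard, hpart, hres⟩ := Nat.sInf_mem (exists_resolving_partition G hG)
  -- basic facts
  have h01 : (0 : Fin (m+3)) ≠ 1 := by
    intro hc; have := congrArg Fin.val hc; simp at this
  set R : Set (Fin (m+3)) := {x | x ≠ 0 ∧ x ≠ 1} with hR
  have hRne : R.Nonempty := by
    refine ⟨⟨2, by omega⟩, ?_, ?_⟩ <;>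
      (intro hc; have := congrArg Fin.val hc; simp [Fin.ext_iff] at this)
  have hPne : ∀ P ∈ Pi, (P : Set V).Nonempty := by
    intro P hP
    rcases Set.eq_empty_or_nonempty P with rfl | h
    · exact absurd hP hpart.1
    · exact h
  have hVne : Nonempty V := hG.nonempty
  -- the new partition
  set D0 : Set (V × Fin (m+3)) := Set.univ ×ˢ {0} with hD0
  set D1 : Set (V × Fin (m+3)) := Set.univ ×ˢ {1} with hD1
  set Pi' : Finset (Set (V × Fin (m+3))) :=
    Pi.image (fun P => (P : Set V) ×ˢ R) ∪ {D0, D1} with hPi'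
  have hmem' : ∀ Q ∈ Pi', (∃ P ∈ Pi, Q = (P : Set V) ×ˢ R) ∨ Q = D0 ∨ Q = D1 := by
    intro Q hQ
    simp only [hPi', Finset.mem_union, Finset.mem_image, Finset.mem_insert,
      Finset.mem_singleton] at hQ
    rcases hQ with ⟨P, hP, rfl⟩ | h | h
    · exact Or.inl ⟨P, hP, rfl⟩
    · exact Or.inr (Or.inl h)
    · exact Or.inr (Or.inr h)
  have hmemD0 : D0 ∈ Pi' := by simp [hPi']
  have hmemD1 : D1 ∈ Pi' := by simp [hPi']
  have hmemP : ∀ P ∈ Pi, (P : Set V) ×ˢ R ∈ Pi' := by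
    intro P hP; simp only [hPi', Finset.mem_union, Finset.mem_image]
    exact Or.inl ⟨P, hP, rfl⟩
  -- distance computations
  have hdD : ∀ (g : V) (h : Fin (m+3)) (w : Fin (m+3)),
      distToSet (G.boxProd C) (g, h) (Set.univ ×ˢ {w}) = C.dist h w := by
    intro g h w
    rw [distToSet_prod' hG hCconn ⟨g, Set.mem_univ g⟩ (Set.singleton_nonempty w),
      distToSet_univ, distToSet_singleton, Nat.zero_add]
  -- card bound
  have hcardle : Pi'.card ≤ partitionDim G + 2 := by
    calc Pi'.card ≤ (Pi.image (fun P => (P : Set V) ×ˢ R)).card + ({D0, D1} : Finset _).card :=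
          Finset.card_union_le _ _
      _ ≤ Pi.card + 2 := by
          have h1 := Finset.card_image_le (s := Pi) (f := fun P => (P : Set V) ×ˢ R)
          have h2 : ({D0, D1} : Finset (Set (V × Fin (m+3)))).card ≤ 2 :=
            Finset.card_insert_le _ _ |>.trans (by simp)
          omega
      _ = partitionDim G + 2 := by rw [hcard]; rfl
  -- main membership
  refine le_trans (Nat.sInf_le ⟨Pi', rfl, ?_, ?_⟩) hcardle
  · -- partition
    constructor
    · intro hmem
      rcases hmem' _ hmem with ⟨P, hP, hPe⟩ | h | h
      · exact absurd hPe.symm (((hPne P hP).prod hRne).ne_empty)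
      · exact absurd h.symm ((Set.univ_nonempty.prod (Set.singleton_nonempty _)).ne_empty)
      · exact absurd h.symm ((Set.univ_nonempty.prod (Set.singleton_nonempty _)).ne_empty)
    · rintro ⟨g, h⟩
      by_cases h0 : h = 0
      · subst h0
        refine ⟨D0, ⟨hmemD0, by simp [hD0]⟩, ?_⟩
        rintro Q ⟨hQ, hgQ⟩
        rcases hmem' _ hQ with ⟨P, hP, rfl⟩ | rfl | rfl
        · exact absurd hgQ.2.1 (by simp)
        · rfl
        · exact absurd hgQ.2 (by simp [hD1, h01])
      · by_cases h1 : h = 1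
        · subst h1
          refine ⟨D1, ⟨hmemD1, by simp [hD1]⟩, ?_⟩
          rintro Q ⟨hQ, hgQ⟩
          rcases hmem' _ hQ with ⟨P, hP, rfl⟩ | rfl | rfl
          · exact absurd hgQ.2.2 (by simp)
          · exact absurd hgQ.2 (by simp [hD0, h01.symm])
          · rfl
        · obtain ⟨P, ⟨hP, hgP⟩, huniq⟩ := hpart.2 g
          refine ⟨(P : Set V) ×ˢ R, ⟨hmemP P hP, ⟨hgP, h0, h1⟩⟩, ?_⟩
          rintro Q ⟨hQ, hgQ⟩
          rcases hmem' _ hQ with ⟨P', hP', rfl⟩ | rfl | rfl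
          · rw [huniq P' ⟨hP', hgQ.1⟩]
          · exact absurd hgQ.2 (by simp [hD0, h0])
          · exact absurd hgQ.2 (by simp [hD1, h1])
  · -- resolving
    rintro ⟨g, h⟩ ⟨g', h'⟩ huv
    by_cases hh : h = h'
    · subst hh
      have hgg : g ≠ g' := fun hc => huv (by rw [hc])
      obtain ⟨P, hP, hd⟩ := hres g g' hgg
      refine ⟨(P : Set V) ×ˢ R, hmemP P hP, ?_⟩
      rw [distToSet_prod' hG hCconn (hPne P hP) hRne,
        distToSet_prod' hG hCconn (hPne P hP) hRne]
      omega
    · rcases cycle_resolve m hh with hd | hd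
      · exact ⟨D0, hmemD0, by rw [hD0, hdD, hdD]; exact hd⟩
      · exact ⟨D1, hmemD1, by rw [hD1, hdD, hdD]; exact hd⟩
end

section
/- If a connected graph G has at least 2 vertices, then pd(G) ≥ 2; moreover pd(G) = 2 if and only if G is a path. -/
open SimpleGraph

set_option linter.unusedSectionVars false
set_option linter.unusedVariables false
set_option maxHeartbeats 1000000

lemma iso_dist_eq {V W : Type*} {G : SimpleGraph V} {H : SimpleGraph W} (e : G ≃g H)
    (hG : G.Connected) (u v : V) : H.dist (e u) (e v) = G.dist u v := by
  apply le_antisymm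
  · obtain ⟨p, hp⟩ := (hG u v).exists_walk_length_eq_dist
    calc H.dist (e u) (e v) ≤ (p.map e.toHom).length := dist_le _
    _ = G.dist u v := by rw [Walk.length_map, hp]
  · have hr : H.Reachable (e u) (e v) := Reachable.map e.toHom (hG u v)
    obtain ⟨q, hq⟩ := hr.exists_walk_length_eq_dist
    have : G.dist (e.symm (e u)) (e.symm (e v)) ≤ (q.map e.symm.toHom).length := dist_le _
    simpa [Walk.length_map, hq] using this

lemma pathGraph_walk_len {n : ℕ} {i j : Fin n} (p : (pathGraph n).Walk i j) :
    i.val ≤ j.val + p.length ∧ j.val ≤ i.val + p.length := by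
  induction p with
  | nil => simp
  | cons h p ih =>
    rw [pathGraph_adj] at h
    rw [Walk.length_cons]
    omega

lemma pathGraph_exists_walk {n : ℕ} : ∀ (d : ℕ) (i j : Fin n), i.val + d = j.val →
    ∃ p : (pathGraph n).Walk i j, p.length = d := by
  intro d
  induction d with
  | zero => intro i j h; have : i = j := Fin.ext (by omega); subst this; exact ⟨Walk.nil, rfl⟩
  | succ d ih =>
    intro i j h
    have hlt : i.val + 1 < n := by omega
    set i' : Fin n := ⟨i.val + 1, hlt⟩ with hi'
    have hadj : (pathGraph n).Adj i i' := by rw [pathGraph_adj]; left; rfl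
    obtain ⟨p, hp⟩ := ih i' j (by simp [hi']; omega)
    exact ⟨Walk.cons hadj p, by simp [hp]⟩

lemma pathGraph_dist {n : ℕ} (i j : Fin n) (hij : i.val ≤ j.val) :
    (pathGraph n).dist i j = j.val - i.val := by
  apply le_antisymm
  · obtain ⟨p, hp⟩ := pathGraph_exists_walk (j.val - i.val) i j (by omega)
    calc (pathGraph n).dist i j ≤ p.length := dist_le _
    _ = j.val - i.val := hp
  · have hpos : 0 < n := i.pos
    have hr : (pathGraph n).Reachable i j := by
      obtain ⟨p, _⟩ := pathGraph_exists_walk (j.val - i.val) i j (by omega)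
      exact ⟨p⟩
    obtain ⟨p, hp⟩ := hr.exists_walk_length_eq_dist
    have := pathGraph_walk_len p
    omega

section Main
variable {V : Type*} {G : SimpleGraph V}

lemma distToSet_le {v x : V} {P : Set V} (hx : x ∈ P) : distToSet G v P ≤ G.dist v x :=
  Nat.sInf_le ⟨x, hx, rfl⟩

lemma distToSet_exists {v : V} {P : Set V} (hP : P.Nonempty) :
    ∃ x ∈ P, G.dist v x = distToSet G v P := by
  have h := Nat.sInf_mem (hP.image (G.dist v))
  obtain ⟨x, hx, hh⟩ := h
  exact ⟨x, hx, hh⟩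

lemma distToSet_eq_zero_of_mem {v : V} {P : Set V} (h : v ∈ P) : distToSet G v P = 0 := by
  have := distToSet_le (G := G) (v := v) h
  rwa [SimpleGraph.dist_self, Nat.le_zero] at this

lemma mem_of_distToSet_eq_zero (hG : G.Connected) {v : V} {P : Set V} (hP : P.Nonempty)
    (h : distToSet G v P = 0) : v ∈ P := by
  obtain ⟨x, hx, hd⟩ := distToSet_exists (G := G) (v := v) hP
  rw [h] at hd
  rwa [hG.dist_eq_zero_iff.mp hd]

lemma distToSet_singleton_s17 (u v : V) : distToSet G u {v} = G.dist u v := by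
  simp [distToSet]

lemma distToSet_le_add (hG : G.Connected) (u v : V) {P : Set V} (hP : P.Nonempty) :
    distToSet G u P ≤ G.dist u v + distToSet G v P := by
  obtain ⟨x, hx, hd⟩ := distToSet_exists (G := G) (v := v) hP
  calc distToSet G u P ≤ G.dist u x := distToSet_le hx
  _ ≤ G.dist u v + G.dist v x := hG.dist_triangle
  _ = _ := by rw [hd]

section Forward
variable [Fintype V]

/-- Neighbor one step closer to the other part. -/
lemma step_lemma (hG : G.Connected) {A B : Set V} (hBne : B.Nonempty)
    (hcover : ∀ v, v ∈ A ∨ v ∈ B) (hdisj : ∀ v, ¬(v ∈ A ∧ v ∈ B))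
    {v : V} (hv : v ∈ A) (h2 : 2 ≤ distToSet G v B) :
    ∃ w ∈ A, G.Adj v w ∧ distToSet G w B + 1 = distToSet G v B := by
  obtain ⟨x, hx, hd⟩ := distToSet_exists (G := G) (v := v) hBne
  have hne : G.dist v x ≠ 0 := by omega
  obtain ⟨p, hp⟩ := exists_walk_of_dist_ne_zero hne
  cases p with
  | nil => exact absurd dist_self hne
  | cons hadj q =>
    rename_i w
    rw [Walk.length_cons] at hp
    have hqd : G.dist w x ≤ q.length := dist_le q
    have hwB : distToSet G w B ≤ G.dist w x := distToSet_le hx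
    have htri : distToSet G v B ≤ G.dist v w + distToSet G w B := distToSet_le_add hG v w hBne
    have hdvw : G.dist v w = 1 := dist_eq_one_iff_adj.mpr hadj
    have heq : distToSet G w B + 1 = distToSet G v B := by omega
    have hwA : w ∈ A := by
      rcases hcover w with h | h
      · exact h
      · exfalso; have := distToSet_eq_zero_of_mem (G := G) h; omega
    exact ⟨w, hwA, hadj, heq⟩

/-- Downward closure of distance values. -/
lemma reach_lemma (hG : G.Connected) {A B : Set V} (hBne : B.Nonempty)
    (hcover : ∀ v, v ∈ A ∨ v ∈ B) (hdisj : ∀ v, ¬(v ∈ A ∧ v ∈ B)) :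
    ∀ m : ℕ, ∀ v ∈ A, distToSet G v B = m → ∀ k, 1 ≤ k → k ≤ m →
      ∃ w ∈ A, distToSet G w B = k := by
  intro m
  induction m using Nat.strong_induction_on with
  | _ m ih =>
    intro v hv hm k hk1 hkm
    rcases eq_or_lt_of_le hkm with h | h
    · exact ⟨v, hv, by omega⟩
    · have h2 : 2 ≤ distToSet G v B := by omega
      obtain ⟨w, hwA, _, hw⟩ := step_lemma hG hBne hcover hdisj hv h2
      exact ih (m - 1) (by omega) w hwA (by omega) k hk1 (by omega)

open scoped Classical in
/-- Bound on distances by cardinality of the part. -/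
lemma card_bound (hG : G.Connected) {A B : Set V} (hBne : B.Nonempty)
    (hcover : ∀ v, v ∈ A ∨ v ∈ B) (hdisj : ∀ v, ¬(v ∈ A ∧ v ∈ B))
    {v : V} (hv : v ∈ A) : distToSet G v B ≤ A.toFinset.card := by
  classical
  set m := distToSet G v B with hm
  have hch : ∀ k ∈ Finset.Icc 1 m, ∃ w ∈ A, distToSet G w B = k := fun k hk => by
    rw [Finset.mem_Icc] at hk
    exact reach_lemma hG hBne hcover hdisj m v hv rfl k hk.1 hk.2
  choose f hfA hfd using hch
  have : (Finset.Icc 1 m).card ≤ A.toFinset.card := by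
    apply Finset.card_le_card_of_injOn (fun k => if h : k ∈ Finset.Icc 1 m then f k h else v)
    · intro k hk
      simp only [hk, dif_pos]
      rw [Finset.mem_coe, Set.mem_toFinset, dif_pos (Finset.mem_coe.mp hk)]
      exact hfA k hk
    · intro k hk k' hk' h
      simp only [Finset.mem_coe] at hk hk'
      simp only [hk, hk', dif_pos] at h
      have h1 := hfd k hk
      have h2 := hfd k' hk'
      rw [h] at h1
      omega
  simpa using this

end Forward

variable [Fintype V]

lemma forward_lemma (hG : G.Connected)
    {A B : Set V} (hAne : A.Nonempty) (hBne : B.Nonempty)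
    (hcover : ∀ v, v ∈ A ∨ v ∈ B) (hdisj : ∀ v, ¬(v ∈ A ∧ v ∈ B))
    (hres : ∀ u v : V, u ≠ v →
      distToSet G u A ≠ distToSet G v A ∨ distToSet G u B ≠ distToSet G v B) :
    Nonempty (G ≃g pathGraph (Fintype.card V)) := by
  classical
  set n := Fintype.card V with hn
  set a := A.toFinset.card with ha
  set b := B.toFinset.card with hb
  have hcover' : ∀ v, v ∈ B ∨ v ∈ A := fun v => (hcover v).symm
  have hdisj' : ∀ v, ¬(v ∈ B ∧ v ∈ A) := fun v h => hdisj v ⟨h.2, h.1⟩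
  have hres' : ∀ u v : V, u ≠ v →
      distToSet G u B ≠ distToSet G v B ∨ distToSet G u A ≠ distToSet G v A :=
    fun u v h => (hres u v h).symm
  -- basic positivity
  have hApos : ∀ v ∈ A, 1 ≤ distToSet G v B := by
    intro v hv
    by_contra h
    exact hdisj v ⟨hv, mem_of_distToSet_eq_zero hG hBne (by omega)⟩
  have hBpos : ∀ v ∈ B, 1 ≤ distToSet G v A := by
    intro v hv
    by_contra h
    exact hdisj v ⟨mem_of_distToSet_eq_zero hG hAne (by omega), hv⟩
  -- injectivity within parts
  have hinjA : ∀ u ∈ A, ∀ v ∈ A, u ≠ v → distToSet G u B ≠ distToSet G v B := by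
    intro u hu v hv huv
    rcases hres u v huv with h | h
    · rw [distToSet_eq_zero_of_mem hu, distToSet_eq_zero_of_mem hv] at h; omega
    · exact h
  have hinjB : ∀ u ∈ B, ∀ v ∈ B, u ≠ v → distToSet G u A ≠ distToSet G v A := by
    intro u hu v hv huv
    rcases hres u v huv with h | h
    · exact h
    · rw [distToSet_eq_zero_of_mem hu, distToSet_eq_zero_of_mem hv] at h; omega
  have hab : a + b = n := by
    rw [ha, hb, hn]
    rw [← Finset.card_union_of_disjoint, ← Finset.card_univ]
    · congr 1
      ext v
      simp only [Finset.mem_union, Set.mem_toFinset, Finset.mem_univ, iff_true]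
      exact hcover v
    · rw [Finset.disjoint_left]
      intro v hv hv'
      exact hdisj v ⟨by simpa using hv, by simpa using hv'⟩
  -- position function
  set pos : V → ℤ := fun v => if v ∈ A then -(distToSet G v B : ℤ) else (distToSet G v A : ℤ) - 1
    with hpos
  have hposA : ∀ v ∈ A, pos v = -(distToSet G v B : ℤ) := by
    intro v hv; simp only [hpos, if_pos hv]
  have hposB : ∀ v ∈ B, pos v = (distToSet G v A : ℤ) - 1 := by
    intro v hv
    have : v ∉ A := fun h => hdisj v ⟨h, hv⟩
    simp only [hpos, if_neg this]
  have hbnd : ∀ v, 0 ≤ pos v + a ∧ pos v + a < n := by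
    intro v
    rcases hcover v with hv | hv
    · have h1 := hApos v hv
      have h2 := card_bound hG hBne hcover hdisj hv
      rw [hposA v hv]
      omega
    · have h1 := hBpos v hv
      have h2 := card_bound hG hAne hcover' hdisj' hv
      rw [hposB v hv]
      omega
  have hposinj : Function.Injective pos := by
    intro u v h
    by_contra huv
    rcases hcover u with hu | hu <;> rcases hcover v with hv | hv
    · rw [hposA u hu, hposA v hv] at h
      exact hinjA u hu v hv huv (by omega)
    · have := hApos u hu; have := hBpos v hv
      rw [hposA u hu] at h; rw [hposB v hv] at h; omega
    · have := hBpos u hu; have := hApos v hv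
      rw [hposB u hu] at h; rw [hposA v hv] at h; omega
    · rw [hposB u hu, hposB v hv] at h
      exact hinjB u hu v hv huv (by omega)
  -- adjacency helpers
  have hadjA : ∀ u ∈ A, ∀ v ∈ A, distToSet G v B + 1 = distToSet G u B → G.Adj u v := by
    intro u hu v hv hd
    have h2 : 2 ≤ distToSet G u B := by have := hApos v hv; omega
    obtain ⟨w, hwA, hadj, hw⟩ := step_lemma hG hBne hcover hdisj hu h2
    have hwv : w = v := by
      by_contra hne
      exact hinjA w hwA v hv hne (by omega)
    rwa [hwv] at hadj
  have hadjB : ∀ u ∈ B, ∀ v ∈ B, distToSet G v A + 1 = distToSet G u A → G.Adj u v := by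
    intro u hu v hv hd
    have h2 : 2 ≤ distToSet G u A := by have := hBpos v hv; omega
    obtain ⟨w, hwB, hadj, hw⟩ := step_lemma hG hAne hcover' hdisj' hu h2
    have hwv : w = v := by
      by_contra hne
      exact hinjB w hwB v hv hne (by omega)
    rwa [hwv] at hadj
  have hcross : ∀ u ∈ A, ∀ v ∈ B, distToSet G u B = 1 → distToSet G v A = 1 → G.Adj u v := by
    intro u hu v hv h1 h2
    obtain ⟨x, hx, hd⟩ := distToSet_exists (G := G) (v := u) hBne
    rw [h1] at hd
    have hadj : G.Adj u x := dist_eq_one_iff_adj.mp hd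
    have hxA : distToSet G x A ≤ 1 := by
      have := distToSet_le (G := G) (v := x) hu
      rwa [dist_comm, hd] at this
    have hxA1 : distToSet G x A = 1 := by
      have := hBpos x hx; omega
    have hxv : x = v := by
      by_contra hne
      exact hinjB x hx v hv hne (by rw [hxA1, h2])
    rwa [hxv] at hadj
  -- the key adjacency characterization
  have key : ∀ u v, G.Adj u v ↔ (pos u + 1 = pos v ∨ pos v + 1 = pos u) := by
    intro u v
    constructor
    · intro h
      have hd1 : G.dist u v = 1 := dist_eq_one_iff_adj.mpr h
      have hd1' : G.dist v u = 1 := by rwa [dist_comm] at hd1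
      have huv : u ≠ v := h.ne
      have hstep1 : distToSet G u B ≤ 1 + distToSet G v B := by
        have := distToSet_le_add hG u v hBne; omega
      have hstep2 : distToSet G v B ≤ 1 + distToSet G u B := by
        have := distToSet_le_add hG v u hBne; omega
      have hstep3 : distToSet G u A ≤ 1 + distToSet G v A := by
        have := distToSet_le_add hG u v hAne; omega
      have hstep4 : distToSet G v A ≤ 1 + distToSet G u A := by
        have := distToSet_le_add hG v u hAne; omega
      rcases hcover u with hu | hu <;> rcases hcover v with hv | hv
      · have := hinjA u hu v hv huv
        rw [hposA u hu, hposA v hv]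
        omega
      · have h1 : distToSet G u B ≤ 1 := by
          have := distToSet_le (G := G) (v := u) hv; omega
        have h2 : distToSet G v A ≤ 1 := by
          have := distToSet_le (G := G) (v := v) hu; omega
        have := hApos u hu; have := hBpos v hv
        rw [hposA u hu, hposB v hv]
        omega
      · have h1 : distToSet G v B ≤ 1 := by
          have := distToSet_le (G := G) (v := v) hu; omega
        have h2 : distToSet G u A ≤ 1 := by
          have := distToSet_le (G := G) (v := u) hv; omega
        have := hApos v hv; have := hBpos u hu
        rw [hposB u hu, hposA v hv]
        omega
      · have := hinjB u hu v hv huv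
        rw [hposB u hu, hposB v hv]
        omega
    · intro h
      rcases hcover u with hu | hu <;> rcases hcover v with hv | hv
      · rw [hposA u hu, hposA v hv] at h
        rcases h with h | h
        · exact hadjA u hu v hv (by omega)
        · exact (hadjA v hv u hu (by omega)).symm
      · rw [hposA u hu, hposB v hv] at h
        have := hApos u hu; have := hBpos v hv
        rcases h with h | h
        · exact hcross u hu v hv (by omega) (by omega)
        · exfalso; omega
      · rw [hposB u hu, hposA v hv] at h
        have := hApos v hv; have := hBpos u hu
        rcases h with h | h
        · exfalso; omega
        · exact (hcross v hv u hu (by omega) (by omega)).symm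
      · rw [hposB u hu, hposB v hv] at h
        rcases h with h | h
        · exact (hadjB v hv u hu (by omega)).symm
        · exact hadjB u hu v hv (by omega)
  -- the bijection to Fin n
  set q : V → Fin n := fun v => ⟨(pos v + a).toNat, by have := hbnd v; omega⟩ with hq
  have hqval : ∀ v, ((q v : Fin n) : ℕ) = (pos v + a).toNat := fun v => rfl
  have hqinj : Function.Injective q := by
    intro u v h
    apply hposinj
    have h1 := hbnd u
    have h2 := hbnd v
    have := congrArg (fun x : Fin n => (x : ℕ)) h
    simp only [hqval] at this
    omega
  have hqbij : Function.Bijective q :=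
    (Fintype.bijective_iff_injective_and_card q).mpr ⟨hqinj, by simp [hn]⟩
  refine ⟨⟨Equiv.ofBijective q hqbij, ?_⟩⟩
  intro u v
  rw [pathGraph_adj]
  simp only [Equiv.ofBijective_apply, hqval]
  rw [key u v]
  have h1 := hbnd u
  have h2 := hbnd v
  omega


lemma exists_resolving [Fintype V] (hG : G.Connected) :
    ∃ Pi : Finset (Set V), Pi.card = Fintype.card V ∧ IsResolvingPartition G ↑Pi := by
  classical
  refine ⟨Finset.univ.image (fun v => ({v} : Set V)), ?_, ?_, ?_⟩
  · rw [Finset.card_image_of_injective _ (fun u v h => by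
      simpa using h), Finset.card_univ]
  · constructor
    · intro h
      simp only [Finset.coe_image, Finset.coe_univ, Set.image_univ, Set.mem_range] at h
      obtain ⟨v, hv⟩ := h
      exact (Set.singleton_ne_empty v) hv
    · intro v
      refine ⟨{v}, ⟨?_, rfl⟩, ?_⟩
      · simp only [Finset.coe_image, Finset.coe_univ, Set.image_univ, Set.mem_range]
        exact ⟨v, rfl⟩
      · rintro b ⟨hb, hvb⟩
        simp only [Finset.coe_image, Finset.coe_univ, Set.image_univ, Set.mem_range] at hb
        obtain ⟨w, hw⟩ := hb
        subst hw
        simp only [Set.mem_singleton_iff] at hvb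
        subst hvb
        rfl
  · intro u v huv
    refine ⟨{u}, ?_, ?_⟩
    · simp only [Finset.coe_image, Finset.coe_univ, Set.image_univ, Set.mem_range]
      exact ⟨u, rfl⟩
    · rw [distToSet_singleton_s17, distToSet_singleton_s17, SimpleGraph.dist_self]
      have := hG.pos_dist_of_ne (Ne.symm huv)
      omega

lemma two_le_pd [Fintype V] (hG : G.Connected) (hV : 2 ≤ Fintype.card V) :
    2 ≤ partitionDim G := by
  classical
  set S := {n | ∃ Pi : Finset (Set V), Pi.card = n ∧ IsResolvingPartition G ↑Pi} with hS
  show 2 ≤ sInf S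
  have hne : S.Nonempty := by
    obtain ⟨Pi, h1, h2⟩ := exists_resolving hG
    exact ⟨Fintype.card V, Pi, h1, h2⟩
  have hmem : sInf S ∈ S := Nat.sInf_mem hne
  by_contra hlt
  push_neg at hlt
  obtain ⟨Pi, hcard, hpart, hres⟩ := hmem
  interval_cases h : sInf S
  · rw [Finset.card_eq_zero] at hcard
    subst hcard
    obtain ⟨u, -⟩ := Fintype.exists_pair_of_one_lt_card (α := V) (by omega)
    obtain ⟨b, ⟨hb, -⟩, -⟩ := hpart.2 u
    simp at hb
  · rw [Finset.card_eq_one] at hcard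
    obtain ⟨P, rfl⟩ := hcard
    obtain ⟨u, v, huv⟩ := Fintype.exists_pair_of_one_lt_card (α := V) (by omega)
    have hmemP : ∀ w : V, w ∈ P := by
      intro w
      obtain ⟨b, ⟨hb, hwb⟩, -⟩ := hpart.2 w
      simp only [Finset.coe_singleton, Set.mem_singleton_iff] at hb
      rwa [hb] at hwb
    obtain ⟨Q, hQ, hd⟩ := hres u v huv
    simp only [Finset.coe_singleton, Set.mem_singleton_iff] at hQ
    subst hQ
    rw [distToSet_eq_zero_of_mem (hmemP u), distToSet_eq_zero_of_mem (hmemP v)] at hd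
    exact hd rfl

lemma pd_le_two [Fintype V] (hG : G.Connected) (hV : 2 ≤ Fintype.card V)
    (e : G ≃g pathGraph (Fintype.card V)) : partitionDim G ≤ 2 := by
  classical
  set n := Fintype.card V with hn
  have h0 : (0 : ℕ) < n := by omega
  set w0 : Fin n := ⟨0, h0⟩ with hw0
  set v0 : V := e.symm w0 with hv0
  have hdistval : ∀ u : V, G.dist u v0 = (e u).val := by
    intro u
    have h1 : G.dist u v0 = (pathGraph n).dist (e u) (e v0) := (iso_dist_eq e hG u v0).symm
    rw [h1, hv0, RelIso.apply_symm_apply, dist_comm, pathGraph_dist w0 (e u) (by simp [hw0])]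
    simp [hw0]
  apply Nat.sInf_le
  refine ⟨{({v0} : Set V), ({v0}ᶜ : Set V)}, ?_, ?_, ?_⟩
  · rw [Finset.card_pair]
    intro h
    have : v0 ∈ ({v0}ᶜ : Set V) := h ▸ Set.mem_singleton v0
    simp at this
  · constructor
    · intro h
      simp only [Finset.coe_insert, Finset.coe_singleton, Set.mem_insert_iff,
        Set.mem_singleton_iff] at h
      rcases h with h | h
      · exact (Set.singleton_ne_empty v0) h.symm
      · obtain ⟨u, hu⟩ := Fintype.exists_ne_of_one_lt_card (by omega) v0
        have : u ∈ (∅ : Set V) := by rw [h]; simp [hu]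
        simp at this
    · intro v
      by_cases hv : v = v0
      · refine ⟨{v0}, ⟨by simp, by simp [hv]⟩, ?_⟩
        rintro b ⟨hb, hvb⟩
        simp only [Finset.coe_insert, Finset.coe_singleton, Set.mem_insert_iff,
          Set.mem_singleton_iff] at hb
        rcases hb with rfl | rfl
        · rfl
        · simp [hv] at hvb
      · refine ⟨{v0}ᶜ, ⟨by simp, by simp [hv]⟩, ?_⟩
        rintro b ⟨hb, hvb⟩
        simp only [Finset.coe_insert, Finset.coe_singleton, Set.mem_insert_iff,
          Set.mem_singleton_iff] at hb
        rcases hb with rfl | rfl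
        · simp only [Set.mem_singleton_iff] at hvb
          exact absurd hvb hv
        · rfl
  · intro u v huv
    refine ⟨{v0}, by simp, ?_⟩
    rw [distToSet_singleton_s17, distToSet_singleton_s17, hdistval, hdistval]
    intro h
    exact huv (e.injective (Fin.ext h))

end Main

theorem stmt_17 {V : Type*} [Fintype V] (G : SimpleGraph V) (hG : G.Connected)
    (hV : 2 ≤ Fintype.card V) :
    2 ≤ partitionDim G ∧
      (partitionDim G = 2 ↔
        Nonempty (G ≃g SimpleGraph.pathGraph (Fintype.card V))) := by
  classical
  refine ⟨two_le_pd hG hV, ?_, ?_⟩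
  · intro h
    have hne : {n | ∃ Pi : Finset (Set V), Pi.card = n ∧ IsResolvingPartition G ↑Pi}.Nonempty := by
      obtain ⟨Pi, h1, h2⟩ := exists_resolving hG
      exact ⟨Fintype.card V, Pi, h1, h2⟩
    have h2 : (2 : ℕ) ∈ {n | ∃ Pi : Finset (Set V), Pi.card = n ∧ IsResolvingPartition G ↑Pi} := by
      rw [← h]
      exact Nat.sInf_mem hne
    obtain ⟨Pi, hcard, hpart, hres⟩ := h2
    rw [Finset.card_eq_two] at hcard
    obtain ⟨A, B, hABne, rfl⟩ := hcard
    have hmem : ∀ P : Set V, P ∈ (↑({A, B} : Finset (Set V)) : Set (Set V)) ↔ P = A ∨ P = B := by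
      intro P; simp
    have hAne : A.Nonempty := by
      rw [Set.nonempty_iff_ne_empty]
      intro hc
      exact hpart.1 ((hmem ∅).mpr (Or.inl hc.symm))
    have hBne : B.Nonempty := by
      rw [Set.nonempty_iff_ne_empty]
      intro hc
      exact hpart.1 ((hmem ∅).mpr (Or.inr hc.symm))
    have hcover : ∀ v, v ∈ A ∨ v ∈ B := by
      intro v
      obtain ⟨b, ⟨hb, hvb⟩, -⟩ := hpart.2 v
      rcases (hmem b).mp hb with rfl | rfl
      · exact Or.inl hvb
      · exact Or.inr hvb
    have hdisj : ∀ v, ¬(v ∈ A ∧ v ∈ B) := by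
      rintro v ⟨hvA, hvB⟩
      obtain ⟨b, -, huniq⟩ := hpart.2 v
      have h1 : A = b := huniq A ⟨(hmem A).mpr (Or.inl rfl), hvA⟩
      have h2 : B = b := huniq B ⟨(hmem B).mpr (Or.inr rfl), hvB⟩
      exact hABne (h1.trans h2.symm)
    have hres' : ∀ u v : V, u ≠ v →
        distToSet G u A ≠ distToSet G v A ∨ distToSet G u B ≠ distToSet G v B := by
      intro u v huv
      obtain ⟨P, hP, hd⟩ := hres u v huv
      rcases (hmem P).mp hP with rfl | rfl
      · exact Or.inl hd
      · exact Or.inr hd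
    exact forward_lemma hG hAne hBne hcover hdisj hres'
  · rintro ⟨e⟩
    exact le_antisymm (pd_le_two hG hV e) (two_le_pd hG hV)
end
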